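/- For a, b, c nonzero elements of a field K of characteristic ≠ 2, if the equation a·x² + b·y² = z² has a nontrivial solution in K, then for any nonzero a' ∈ K, the equation a·a'·x² + b·y² = z² has a nontrivial solution if and only if a'·x² + b·y² = z² does. -/

import Mathlib

-- The norm form z² - b·y² is multiplicative (Brahmagupta-type identity).
lemma myNormMul {K : Type*} [Field K] (b c d : K)
    (hc : ∃ y z : K, c = z ^ 2 - b * y ^ 2) (hd : ∃ y z : K, d = z ^ 2 - b * y ^ 2) :
    ∃ y z : K, c * d = z ^ 2 - b * y ^ 2 := by
  obtain ⟨y1, z1, rfl⟩ := hc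
  obtain ⟨y2, z2, rfl⟩ := hd
  exact ⟨z1 * y2 + y1 * z2, z1 * z2 + b * y1 * y2, by ring⟩

lemma myNormInv {K : Type*} [Field K] (b c : K) (hc0 : c ≠ 0)
    (hc : ∃ y z : K, c = z ^ 2 - b * y ^ 2) :
    ∃ y z : K, c⁻¹ = z ^ 2 - b * y ^ 2 := by
  obtain ⟨y, z, rfl⟩ := hc
  refine ⟨y / (z ^ 2 - b * y ^ 2), z / (z ^ 2 - b * y ^ 2), ?_⟩
  field_simp

-- Key characterization: for c ≠ 0, b ≠ 0, char ≠ 2, the conic c·x²+b·y²=z²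
-- has a nontrivial solution iff c is a value of the norm form z² - b·y².
lemma key {K : Type*} [Field K] (hchar : (2 : K) ≠ 0) (b c : K) (hb : b ≠ 0) (hc : c ≠ 0) :
    (∃ x y z : K, (x, y, z) ≠ (0, 0, 0) ∧ c * x ^ 2 + b * y ^ 2 = z ^ 2) ↔
    (∃ y z : K, c = z ^ 2 - b * y ^ 2) := by
  constructor
  · rintro ⟨x, y, z, hnt, heq⟩
    by_cases hx : x = 0
    · subst hx
      have hy : y ≠ 0 := by
        intro hy
        subst hy
        have hz : z ^ 2 = 0 := by linear_combination -heq
        have : z = 0 := by exact pow_eq_zero_iff (by norm_num) |>.mp hz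
        exact hnt (by simp [this])
      -- b = (z/y)² is a square, s := z/y ≠ 0
      have hs : b = (z / y) ^ 2 := by
        field_simp
        linear_combination heq
      set s := z / y with hsdef
      have hs0 : s ≠ 0 := by
        intro h0
        rw [h0] at hs
        simp at hs
        exact hb hs
      refine ⟨(1 - c) / (2 * s), (c + 1) / 2, ?_⟩
      rw [hs]
      field_simp
      ring
    · exact ⟨y / x, z / x, by field_simp; linear_combination heq⟩
  · rintro ⟨y, z, rfl⟩
    exact ⟨1, y, z, by simp, by ring⟩

theorem stmt15 (K : Type*) [Field K] (hchar : (2 : K) ≠ 0)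
    (a b : K) (ha : a ≠ 0) (hb : b ≠ 0)
    (h : ∃ x y z : K, (x, y, z) ≠ (0, 0, 0) ∧ a * x ^ 2 + b * y ^ 2 = z ^ 2)
    (a' : K) (ha' : a' ≠ 0) :
    (∃ x y z : K, (x, y, z) ≠ (0, 0, 0) ∧ a * a' * x ^ 2 + b * y ^ 2 = z ^ 2) ↔
    (∃ x y z : K, (x, y, z) ≠ (0, 0, 0) ∧ a' * x ^ 2 + b * y ^ 2 = z ^ 2) := by
  rw [key hchar b (a * a') hb (mul_ne_zero ha ha'), key hchar b a' hb ha']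
  rw [key hchar b a hb ha] at h
  constructor
  · intro haa'
    have := myNormMul b a⁻¹ (a * a') (myNormInv b a ha h) haa'
    rwa [inv_mul_cancel_left₀ ha] at this
  · intro ha'n
    exact myNormMul b a a' h ha'n
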